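/- Fix β ∈ (0,1) and set p_β := VaR_β(p_T), p̄_i(x_i) := max(p_β, p_i^(z)(x_i)), and h_β(x_i) := E[(p_T − p_τ) · 1{p_T ≥ p̄_i(x_i)}] for x_i ∈ [0, q_i]. Then a point x★ ∈ X minimizes x ↦ CVaR_β(L(x, p_T)) over X if and only if there exists θ★ ∈ ℝ such that for each i: 0 < x★_i < q_i implies h_β(x★_i) = θ★; x★_i = 0 implies h_β(0) ≤ θ★; and x★_i = q_i implies h_β(q_i) ≥ θ★. -/

import Mathlib

open MeasureTheory

/-- Post-ADL equity. -/
noncomputable def equity (qi pei mi pτ xi p : ℝ) : ℝ :=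
  qi * (pei - p) - xi * (pτ - p) + mi

/-- Per-account shortfall. -/
noncomputable def shortfall (qi pei mi pτ xi p : ℝ) : ℝ :=
  max (-(equity qi pei mi pτ xi p)) 0

/-- Total exchange loss. -/
noncomputable def totalLoss {n : ℕ} (q pe m : Fin n → ℝ) (pτ : ℝ)
    (x : Fin n → ℝ) (p : ℝ) : ℝ :=
  ∑ i, shortfall (q i) (pe i) (m i) pτ (x i) p

/-- The feasible set of ADL allocations. -/
def feas {n : ℕ} (q : Fin n → ℝ) (Q : ℝ) : Set (Fin n → ℝ) :=
  {x | (∑ i, x i) = Q ∧ ∀ i, 0 ≤ x i ∧ x i ≤ q i}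

/-- Value-at-Risk at level `u`. -/
noncomputable def VaR {Ω : Type*} [MeasurableSpace Ω] (P : Measure Ω)
    (Z : Ω → ℝ) (u : ℝ) : ℝ :=
  sInf {z : ℝ | u ≤ (P {ω | Z ω ≤ z}).toReal}

/-- Conditional Value-at-Risk at level `β ∈ (0,1)`. -/
noncomputable def CVaR {Ω : Type*} [MeasurableSpace Ω] (P : Measure Ω)
    (Z : Ω → ℝ) (β : ℝ) : ℝ :=
  (1 - β)⁻¹ * ∫ u in β..1, VaR P Z u

/-- Zero-equity (bankruptcy) price for `x_i < q_i`. -/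
noncomputable def zeroEquityPrice (qi pei mi pτ xi : ℝ) : ℝ :=
  (qi * pei + mi - xi * pτ) / (qi - xi)

/-- The tail functional `h_β(x_i) = E[(p_T − p_τ) 1{p_T ≥ max(p_β, p_i^(z)(x_i))}]`,
where `p_i^(z)(q_i) = +∞` so that `h_β(q_i) = 0`. -/
noncomputable def hBeta {Ω : Type*} [MeasurableSpace Ω] (P : Measure Ω)
    (pT : Ω → ℝ) (qi pei mi pτ pβ xi : ℝ) : ℝ :=
  if xi = qi then 0
  else ∫ ω in {ω | max pβ (zeroEquityPrice qi pei mi pτ xi) ≤ pT ω}, (pT ω - pτ) ∂P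

open Set Filter Topology

namespace ADLKKT

noncomputable def Fc (μ : Measure ℝ) (t : ℝ) : ℝ := (μ (Set.Iic t)).toReal

noncomputable def quant (μ : Measure ℝ) (u : ℝ) : ℝ := sInf {z | u ≤ Fc μ z}

noncomputable def Dd (μ : Measure ℝ) (β t : ℝ) : ℝ := 1 - max β (Fc μ t)

noncomputable def Bb (μ : Measure ℝ) (β c : ℝ) : ℝ := ∫ t in Set.Ioi c, Dd μ β t

variable {μ : Measure ℝ} [IsProbabilityMeasure μ]

lemma Fc_mono : Monotone (Fc μ) := fun a b hab =>
  ENNReal.toReal_mono (measure_ne_top μ _) (measure_mono (Iic_subset_Iic.2 hab))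

lemma Fc_nonneg (t : ℝ) : 0 ≤ Fc μ t := ENNReal.toReal_nonneg

lemma Fc_le_one (t : ℝ) : Fc μ t ≤ 1 := by
  have h : μ (Set.Iic t) ≤ 1 := prob_le_one
  simpa [Fc] using ENNReal.toReal_mono ENNReal.one_ne_top h

lemma Fc_eq_cdf : Fc μ = ⇑(ProbabilityTheory.cdf μ) := by
  funext t; rw [ProbabilityTheory.cdf_eq_real]; rfl

lemma Fc_continuous (hatom : ∀ t : ℝ, μ {t} = 0) : Continuous (Fc μ) := by
  rw [Fc_eq_cdf]
  rw [continuous_iff_continuousAt]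
  intro x
  apply ((ProbabilityTheory.monotone_cdf μ).continuousAt_iff_leftLim_eq_rightLim).2
  rw [StieltjesFunction.rightLim_eq]
  have h1 : (ProbabilityTheory.cdf μ).measure {x} = 0 := by
    rw [ProbabilityTheory.measure_cdf]; exact hatom x
  rw [StieltjesFunction.measure_singleton] at h1
  have h2 := Monotone.leftLim_le (ProbabilityTheory.monotone_cdf μ) (le_refl x)
  have h3 : ProbabilityTheory.cdf μ x - Function.leftLim (⇑(ProbabilityTheory.cdf μ)) x ≤ 0 :=
    ENNReal.ofReal_eq_zero.1 h1
  linarith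

lemma Fc_tendsto_atTop : Tendsto (Fc μ) atTop (𝓝 1) := by
  rw [Fc_eq_cdf]; exact ProbabilityTheory.tendsto_cdf_atTop μ

lemma Fc_tendsto_atBot : Tendsto (Fc μ) atBot (𝓝 0) := by
  rw [Fc_eq_cdf]; exact ProbabilityTheory.tendsto_cdf_atBot μ

lemma quant_set_nonempty {u : ℝ} (hu : u < 1) : {z | u ≤ Fc μ z}.Nonempty := by
  have := Fc_tendsto_atTop (μ := μ)
  have h := this.eventually (eventually_ge_nhds (by linarith : (u + 1) / 2 < 1))
  obtain ⟨z, hz⟩ := h.exists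
  exact ⟨z, le_trans (by linarith) hz⟩

lemma quant_set_bddBelow {u : ℝ} (hu : 0 < u) : BddBelow {z | u ≤ Fc μ z} := by
  have := Fc_tendsto_atBot (μ := μ)
  have h := this.eventually (eventually_le_nhds (by linarith : (0:ℝ) < u / 2))
  obtain ⟨z, hz⟩ := h.exists
  refine ⟨z, fun y hy => ?_⟩
  by_contra hyz
  push_neg at hyz
  have : Fc μ y ≤ u / 2 := le_trans (Fc_mono hyz.le) hz
  have : u ≤ u / 2 := le_trans hy this
  linarith

lemma quant_mem (hatom : ∀ t : ℝ, μ {t} = 0) {u : ℝ} (hu0 : 0 < u) (hu1 : u < 1) :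
    u ≤ Fc μ (quant μ u) := by
  have hcl : IsClosed {z | u ≤ Fc μ z} :=
    isClosed_le continuous_const (Fc_continuous hatom)
  exact (hcl.csInf_mem (quant_set_nonempty hu1) (quant_set_bddBelow hu0))

lemma quant_galois (hatom : ∀ t : ℝ, μ {t} = 0) {u : ℝ} (hu0 : 0 < u) (hu1 : u < 1) (t : ℝ) :
    quant μ u ≤ t ↔ u ≤ Fc μ t := by
  constructor
  · intro h; exact le_trans (quant_mem hatom hu0 hu1) (Fc_mono h)
  · intro h; exact csInf_le (quant_set_bddBelow hu0) h

lemma Fc_quant (hatom : ∀ t : ℝ, μ {t} = 0) {u : ℝ} (hu0 : 0 < u) (hu1 : u < 1) :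
    Fc μ (quant μ u) = u := by
  refine le_antisymm ?_ (quant_mem hatom hu0 hu1)
  have key : ∀ t, t < quant μ u → Fc μ t < u := by
    intro t ht
    by_contra h
    push_neg at h
    exact absurd (csInf_le (quant_set_bddBelow hu0) h) (not_le.2 ht)
  have hc := (Fc_continuous (μ := μ) hatom).continuousAt (x := quant μ u)
  have hseq : Tendsto (fun n : ℕ => Fc μ (quant μ u - 1 / (n + 1))) atTop (𝓝 (Fc μ (quant μ u))) := by
    apply hc.tendsto.comp
    have : Tendsto (fun n : ℕ => quant μ u - 1 / (n + 1)) atTop (𝓝 (quant μ u - 0)) := by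
      exact tendsto_const_nhds.sub (tendsto_one_div_add_atTop_nhds_zero_nat)
    simpa using this
  refine le_of_tendsto hseq (Eventually.of_forall fun n => ?_)
  refine (key _ ?_).le
  have : (0:ℝ) < 1 / (n + 1) := by positivity
  linarith

lemma quant_mono_on (hatom : ∀ t : ℝ, μ {t} = 0) {u v : ℝ} (hu0 : 0 < u) (huv : u ≤ v)
    (hv1 : v < 1) : quant μ u ≤ quant μ v := by
  refine (quant_galois hatom hu0 (lt_of_le_of_lt huv hv1) _).2 ?_
  exact le_trans huv (quant_mem hatom (lt_of_lt_of_le hu0 huv) hv1)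

lemma meas_Ioi_toReal (t : ℝ) : (μ (Set.Ioi t)).toReal = 1 - Fc μ t := by
  rw [← Set.compl_Iic, measure_compl measurableSet_Iic (measure_ne_top μ _), measure_univ]
  rw [ENNReal.toReal_sub_of_le prob_le_one ENNReal.one_ne_top, ENNReal.toReal_one]; rfl

lemma meas_Ici_toReal (hatom : ∀ t : ℝ, μ {t} = 0) (t : ℝ) :
    (μ (Set.Ici t)).toReal = 1 - Fc μ t := by
  rw [← measure_congr (MeasureTheory.Ioi_ae_eq_Ici' (hatom t)), meas_Ioi_toReal]

lemma shift_setIntegral (φ : ℝ → ℝ) (s : ℝ) :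
    (∫ t in Set.Ioi (0:ℝ), φ (s + t)) = ∫ t in Set.Ioi s, φ t := by
  rw [← integral_indicator measurableSet_Ioi, ← integral_indicator measurableSet_Ioi]
  rw [← integral_add_right_eq_self ((Set.Ioi s).indicator φ) s]
  congr 1
  funext x
  simp only [Set.indicator_apply, Set.mem_Ioi]
  by_cases h : 0 < x
  · rw [if_pos h, if_pos (by linarith : s < x + s), add_comm]
  · rw [if_neg h, if_neg (fun hc => h (by linarith))]

lemma shift_setLIntegral (g : ℝ → ENNReal) (s : ℝ) :
    (∫⁻ t in Set.Ioi (0:ℝ), g (s + t)) = ∫⁻ t in Set.Ioi s, g t := by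
  rw [← lintegral_indicator measurableSet_Ioi, ← lintegral_indicator measurableSet_Ioi]
  rw [← lintegral_add_right_eq_self ((Set.Ioi s).indicator g) s]
  congr 1
  funext x
  simp only [Set.indicator_apply, Set.mem_Ioi]
  by_cases h : 0 < x
  · rw [if_pos h, if_pos (by linarith : s < x + s), add_comm]
  · rw [if_neg h, if_neg (fun hc => h (by linarith))]

lemma pos_part_set_eq (s t : ℝ) (ht : 0 < t) :
    {a : ℝ | t < max (a - s) 0} = Set.Ioi (s + t) := by
  ext a
  simp only [Set.mem_setOf_eq, Set.mem_Ioi, lt_max_iff]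
  constructor
  · rintro (h | h)
    · linarith
    · linarith
  · intro h; left; linarith

lemma tail_lintegral (hμint : Integrable (fun p : ℝ => p) μ) (s : ℝ) :
    (∫⁻ t in Set.Ioi s, ENNReal.ofReal (1 - Fc μ t))
      = ∫⁻ p, ENNReal.ofReal (max (p - s) 0) ∂μ := by
  have h1 : ∀ t : ℝ, ENNReal.ofReal (1 - Fc μ t) = μ (Set.Ioi t) := by
    intro t
    rw [← meas_Ioi_toReal, ENNReal.ofReal_toReal (measure_ne_top μ _)]
  have h2 : (∫⁻ t in Set.Ioi s, ENNReal.ofReal (1 - Fc μ t))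
      = ∫⁻ t in Set.Ioi s, μ (Set.Ioi t) := by
    apply lintegral_congr; intro t; rw [h1]
  rw [h2, ← shift_setLIntegral (fun t => μ (Set.Ioi t)) s]
  have h3 : Integrable (fun p => max (p - s) 0) μ :=
    (hμint.sub (integrable_const s)).pos_part
  rw [lintegral_eq_lintegral_meas_lt μ (f := fun p => max (p - s) 0)
    (Eventually.of_forall fun p => le_max_right _ _) h3.aemeasurable]
  apply setLIntegral_congr_fun measurableSet_Ioi
  exact fun t ht => by rw [pos_part_set_eq s t ht]

lemma pos_part_lintegral_lt_top (hμint : Integrable (fun p : ℝ => p) μ) (s : ℝ) :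
    (∫⁻ p, ENNReal.ofReal (max (p - s) 0) ∂μ) < ⊤ := by
  have h3 : Integrable (fun p => max (p - s) 0) μ :=
    (hμint.sub (integrable_const s)).pos_part
  exact h3.lintegral_lt_top

lemma oneSubFc_integrableOn (hatom : ∀ t : ℝ, μ {t} = 0)
    (hμint : Integrable (fun p : ℝ => p) μ) (s : ℝ) :
    IntegrableOn (fun t => 1 - Fc μ t) (Set.Ioi s) := by
  constructor
  · exact ((continuous_const.sub (Fc_continuous hatom)).aestronglyMeasurable).restrict
  · rw [hasFiniteIntegral_iff_ofReal (Eventually.of_forall fun t => by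
      simpa using Fc_le_one (μ := μ) t)]
    rw [tail_lintegral hμint s]
    exact pos_part_lintegral_lt_top hμint s

lemma tail_integral_eq (hμint : Integrable (fun p : ℝ => p) μ) (s : ℝ) :
    (∫ p, max (p - s) 0 ∂μ) = ∫ t in Set.Ioi s, (1 - Fc μ t) := by
  have h3 : Integrable (fun p => max (p - s) 0) μ :=
    (hμint.sub (integrable_const s)).pos_part
  rw [h3.integral_eq_integral_meas_lt (Eventually.of_forall fun p => le_max_right _ _)]
  have hcong : ∀ t ∈ Set.Ioi (0:ℝ),
      μ.real {a : ℝ | t < max (a - s) 0} = (fun t => 1 - Fc μ (s + t)) t := by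
    intro t ht
    rw [pos_part_set_eq s t ht, measureReal_def, meas_Ioi_toReal]
  rw [setIntegral_congr_fun measurableSet_Ioi hcong, shift_setIntegral (fun t => 1 - Fc μ t) s]

lemma Dd_nonneg {β : ℝ} (hβ : β ≤ 1) (t : ℝ) : 0 ≤ Dd μ β t := by
  have := Fc_le_one (μ := μ) t
  simp only [Dd, sub_nonneg, max_le_iff]
  exact ⟨hβ, this⟩

lemma Dd_le {β : ℝ} (t : ℝ) : Dd μ β t ≤ 1 - β := by
  simp only [Dd]; have := le_max_left β (Fc μ t); linarith

lemma Dd_le_oneSubFc {β : ℝ} (t : ℝ) : Dd μ β t ≤ 1 - Fc μ t := by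
  simp only [Dd]; have := le_max_right β (Fc μ t); linarith

lemma Dd_antitone {β : ℝ} : Antitone (Dd μ β) := by
  intro a b hab
  simp only [Dd]
  have : max β (Fc μ a) ≤ max β (Fc μ b) := max_le_max (le_refl β) (Fc_mono hab)
  linarith

lemma Dd_continuous (hatom : ∀ t : ℝ, μ {t} = 0) {β : ℝ} : Continuous (Dd μ β) := by
  exact continuous_const.sub (continuous_const.max (Fc_continuous hatom))

lemma Dd_integrableOn (hatom : ∀ t : ℝ, μ {t} = 0)
    (hμint : Integrable (fun p : ℝ => p) μ) {β : ℝ} (hβ : β ≤ 1) (c : ℝ) :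
    IntegrableOn (Dd μ β) (Set.Ioi c) := by
  apply Integrable.mono' (oneSubFc_integrableOn hatom hμint c)
  · exact ((Dd_continuous hatom).aestronglyMeasurable).restrict
  · refine Eventually.of_forall fun t => ?_
    rw [Real.norm_of_nonneg (Dd_nonneg hβ t)]
    exact Dd_le_oneSubFc t

lemma Bb_nonneg {β : ℝ} (hβ : β ≤ 1) (c : ℝ) : 0 ≤ Bb μ β c :=
  setIntegral_nonneg measurableSet_Ioi fun t _ => Dd_nonneg hβ t

lemma Bb_split (hatom : ∀ t : ℝ, μ {t} = 0) (hμint : Integrable (fun p : ℝ => p) μ)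
    {β : ℝ} (hβ : β ≤ 1) {c c' : ℝ} (h : c ≤ c') :
    Bb μ β c = (∫ t in Set.Ioc c c', Dd μ β t) + Bb μ β c' := by
  rw [Bb, ← Set.Ioc_union_Ioi_eq_Ioi h]
  rw [setIntegral_union (Set.Ioc_disjoint_Ioi le_rfl) measurableSet_Ioi
    ((Dd_integrableOn hatom hμint hβ c).mono_set Set.Ioc_subset_Ioi_self)
    (Dd_integrableOn hatom hμint hβ c')]
  rfl

lemma integral_Ioc_Dd_le (hatom : ∀ t : ℝ, μ {t} = 0) (hμint : Integrable (fun p : ℝ => p) μ)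
    {β : ℝ} (hβ : β ≤ 1) {c c' : ℝ} (h : c ≤ c') :
    (∫ t in Set.Ioc c c', Dd μ β t) ≤ (c' - c) * Dd μ β c := by
  have h1 : (∫ t in Set.Ioc c c', Dd μ β t) ≤ ∫ _t in Set.Ioc c c', Dd μ β c := by
    apply setIntegral_mono_on
      ((Dd_integrableOn hatom hμint hβ c).mono_set Set.Ioc_subset_Ioi_self)
      (integrableOn_const measure_Ioc_lt_top.ne) measurableSet_Ioc
    exact fun t ht => Dd_antitone ht.1.le
  rw [setIntegral_const] at h1
  rw [Real.volume_real_Ioc_of_le h] at h1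
  simpa [smul_eq_mul] using h1

lemma integral_Ioc_Dd_ge (hatom : ∀ t : ℝ, μ {t} = 0) (hμint : Integrable (fun p : ℝ => p) μ)
    {β : ℝ} (hβ : β ≤ 1) {c c' : ℝ} (h : c ≤ c') :
    (c' - c) * Dd μ β c' ≤ ∫ t in Set.Ioc c c', Dd μ β t := by
  have h1 : (∫ _t in Set.Ioc c c', Dd μ β c') ≤ ∫ t in Set.Ioc c c', Dd μ β t := by
    apply setIntegral_mono_on (integrableOn_const measure_Ioc_lt_top.ne)
      ((Dd_integrableOn hatom hμint hβ c).mono_set Set.Ioc_subset_Ioi_self) measurableSet_Ioc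
    exact fun t ht => Dd_antitone ht.2
  rw [setIntegral_const, Real.volume_real_Ioc_of_le h] at h1
  simpa [smul_eq_mul] using h1

lemma Bb_tangent (hatom : ∀ t : ℝ, μ {t} = 0) (hμint : Integrable (fun p : ℝ => p) μ)
    {β : ℝ} (hβ : β ≤ 1) (c c' : ℝ) :
    Bb μ β c - (c' - c) * Dd μ β c ≤ Bb μ β c' := by
  rcases le_total c c' with h | h
  · have := Bb_split hatom hμint hβ (c := c) (c' := c') h
    have h2 := integral_Ioc_Dd_le hatom hμint hβ h
    linarith
  · have := Bb_split hatom hμint hβ (c := c') (c' := c) h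
    have h2 := integral_Ioc_Dd_ge hatom hμint hβ (c := c') (c' := c) h
    nlinarith [Dd_nonneg (μ := μ) hβ c]

lemma Bb_antitone (hatom : ∀ t : ℝ, μ {t} = 0) (hμint : Integrable (fun p : ℝ => p) μ)
    {β : ℝ} (hβ : β ≤ 1) {c c' : ℝ} (h : c ≤ c') : Bb μ β c' ≤ Bb μ β c := by
  have h1 := Bb_split hatom hμint hβ (c := c) (c' := c') h
  have h2 := integral_Ioc_Dd_ge hatom hμint hβ (c := c) (c' := c') h
  nlinarith [Dd_nonneg (μ := μ) hβ c']

lemma Bb_continuous (hatom : ∀ t : ℝ, μ {t} = 0) (hμint : Integrable (fun p : ℝ => p) μ)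
    {β : ℝ} (hβ0 : 0 ≤ β) (hβ : β ≤ 1) : Continuous (Bb μ β) := by
  have key : ∀ c c', c ≤ c' → |Bb μ β c' - Bb μ β c| ≤ 1 * |c' - c| := by
    intro c c' h
    have h1 := Bb_split hatom hμint hβ (c := c) (c' := c') h
    have h2 := integral_Ioc_Dd_le hatom hμint hβ (c := c) (c' := c') h
    have h3 := integral_Ioc_Dd_ge hatom hμint hβ (c := c) (c' := c') h
    have hD0 : 0 ≤ Dd μ β c' := Dd_nonneg hβ c'
    have hD1 : Dd μ β c ≤ 1 - β := Dd_le c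
    rw [abs_of_nonpos (by nlinarith), abs_of_nonneg (by linarith)]
    nlinarith
  have : LipschitzWith 1 (Bb μ β) := by
    rw [lipschitzWith_iff_dist_le_mul]
    intro x y
    rw [Real.dist_eq, Real.dist_eq]
    rcases le_total x y with h | h
    · rw [abs_sub_comm, abs_sub_comm x y]
      simpa using key x y h
    · simpa using key y x h
  exact this.continuous

lemma Bb_tendsto_atTop (hatom : ∀ t : ℝ, μ {t} = 0) (hμint : Integrable (fun p : ℝ => p) μ)
    {β : ℝ} (hβ : β ≤ 1) : Tendsto (Bb μ β) atTop (𝓝 0) := by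
  have key : Tendsto (fun c => Bb μ β 0 - ∫ t in (0:ℝ)..c, Dd μ β t) atTop
      (𝓝 (Bb μ β 0 - Bb μ β 0)) := by
    apply tendsto_const_nhds.sub
    exact intervalIntegral_tendsto_integral_Ioi 0 (Dd_integrableOn hatom hμint hβ 0) tendsto_id
  rw [sub_self] at key
  apply key.congr'
  filter_upwards [eventually_ge_atTop (0:ℝ)] with c hc
  rw [intervalIntegral.integral_of_le hc]
  have := Bb_split hatom hμint hβ (c := (0:ℝ)) (c' := c) hc
  linarith

lemma quant_lintegral (hatom : ∀ t : ℝ, μ {t} = 0) {β : ℝ} (hβ0 : 0 < β) (hβ1 : β < 1) (c : ℝ) :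
    (∫⁻ u in Set.Ioo β 1, ENNReal.ofReal (max (quant μ u - c) 0))
      = ∫⁻ t in Set.Ioi c, ENNReal.ofReal (Dd μ β t) := by
  have hqm : MonotoneOn (quant μ) (Set.Ioo β 1) := by
    intro a ha b hb hab
    exact quant_mono_on hatom (lt_trans hβ0 ha.1) hab hb.2
  have hmeas : AEMeasurable (fun u => max (quant μ u - c) 0)
      (volume.restrict (Set.Ioo β 1)) := by
    exact ((aemeasurable_restrict_of_monotoneOn measurableSet_Ioo hqm).sub
      aemeasurable_const).max aemeasurable_const
  rw [lintegral_eq_lintegral_meas_lt (volume.restrict (Set.Ioo β 1))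
    (f := fun u => max (quant μ u - c) 0)
    (Eventually.of_forall fun p => le_max_right _ _) hmeas]
  rw [← shift_setLIntegral (fun t => ENNReal.ofReal (Dd μ β t)) c]
  apply setLIntegral_congr_fun measurableSet_Ioi
  intro t ht
  beta_reduce
  rw [Measure.restrict_apply' measurableSet_Ioo]
  have hset : {u : ℝ | t < max (quant μ u - c) 0} ∩ Set.Ioo β 1
      = Set.Ioo (max β (Fc μ (c + t))) 1 := by
    ext u
    simp only [Set.mem_inter_iff, Set.mem_setOf_eq, Set.mem_Ioo, lt_max_iff, max_lt_iff]
    constructor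
    · rintro ⟨h1, hu1, hu2⟩
      simp only [Set.mem_Ioi] at ht
      have hq : c + t < quant μ u := by
        rcases h1 with h1 | h1
        · linarith
        · linarith
      have : ¬ (quant μ u ≤ c + t) := not_le.2 hq
      rw [quant_galois hatom (lt_trans hβ0 hu1) hu2] at this
      exact ⟨⟨hu1, not_le.1 this⟩, hu2⟩
    · rintro ⟨⟨hu1, hu2⟩, hu3⟩
      have : ¬ (u ≤ Fc μ (c + t)) := not_le.2 hu2
      rw [← quant_galois hatom (lt_trans hβ0 hu1) hu3] at this
      refine ⟨Or.inl (by linarith [not_le.1 this]), hu1, hu3⟩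
  rw [hset, Real.volume_Ioo]
  rfl

lemma quant_lintegral_lt_top (hatom : ∀ t : ℝ, μ {t} = 0)
    (hμint : Integrable (fun p : ℝ => p) μ) {β : ℝ} (hβ1 : β ≤ 1) (c : ℝ) :
    (∫⁻ t in Set.Ioi c, ENNReal.ofReal (Dd μ β t)) < ⊤ := by
  have hle : (∫⁻ t in Set.Ioi c, ENNReal.ofReal (Dd μ β t))
      ≤ ∫⁻ t in Set.Ioi c, ENNReal.ofReal (1 - Fc μ t) := by
    apply lintegral_mono
    exact fun t => ENNReal.ofReal_le_ofReal (Dd_le_oneSubFc t)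
  rw [tail_lintegral hμint c] at hle
  exact lt_of_le_of_lt hle (pos_part_lintegral_lt_top hμint c)

lemma quant_integrableOn (hatom : ∀ t : ℝ, μ {t} = 0)
    (hμint : Integrable (fun p : ℝ => p) μ) {β : ℝ} (hβ0 : 0 < β) (hβ1 : β < 1) (c : ℝ) :
    IntegrableOn (fun u => max (quant μ u - c) 0) (Set.Ioo β 1) := by
  have hqm : MonotoneOn (quant μ) (Set.Ioo β 1) := by
    intro a ha b hb hab
    exact quant_mono_on hatom (lt_trans hβ0 ha.1) hab hb.2
  have hmeas : AEMeasurable (fun u => max (quant μ u - c) 0)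
      (volume.restrict (Set.Ioo β 1)) :=
    ((aemeasurable_restrict_of_monotoneOn measurableSet_Ioo hqm).sub
      aemeasurable_const).max aemeasurable_const
  have hnn : 0 ≤ᵐ[volume.restrict (Set.Ioo β 1)] (fun u => max (quant μ u - c) 0) :=
    Eventually.of_forall fun u => le_max_right _ _
  refine ⟨hmeas.aestronglyMeasurable, (hasFiniteIntegral_iff_ofReal
    (f := fun u => max (quant μ u - c) 0) hnn).2 ?_⟩
  rw [quant_lintegral hatom hβ0 hβ1 c]
  exact quant_lintegral_lt_top hatom hμint hβ1.le c

lemma quant_integral (hatom : ∀ t : ℝ, μ {t} = 0)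
    (hμint : Integrable (fun p : ℝ => p) μ) {β : ℝ} (hβ0 : 0 < β) (hβ1 : β < 1) (c : ℝ) :
    (∫ u in Set.Ioo β 1, max (quant μ u - c) 0) = Bb μ β c := by
  have h1 := integral_eq_lintegral_of_nonneg_ae (μ := volume.restrict (Set.Ioo β 1))
    (f := fun u => max (quant μ u - c) 0)
    (Eventually.of_forall fun u => le_max_right _ _)
    (quant_integrableOn hatom hμint hβ0 hβ1 c).aestronglyMeasurable
  have h2 := integral_eq_lintegral_of_nonneg_ae (μ := volume.restrict (Set.Ioi c))
    (f := fun t => Dd μ β t)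
    (Eventually.of_forall fun t => Dd_nonneg hβ1.le t)
    ((Dd_continuous hatom).aestronglyMeasurable).restrict
  rw [Bb, h1, h2, quant_lintegral hatom hβ0 hβ1 c]

lemma tail_h_eq (hatom : ∀ t : ℝ, μ {t} = 0) (hμint : Integrable (fun p : ℝ => p) μ)
    {β : ℝ} (hβ0 : 0 < β) (hβ1 : β < 1) (c r : ℝ) :
    (∫ p in Set.Ici (max (quant μ β) c), (p - r) ∂μ)
      = Bb μ β c + (c - r) * Dd μ β c := by
  set s := max (quant μ β) c with hs
  have hFq : Fc μ (quant μ β) = β := Fc_quant hatom hβ0 hβ1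
  have step1 : (∫ p in Set.Ici s, (p - r) ∂μ)
      = (∫ p in Set.Ici s, (p - s) ∂μ) + (s - r) * (μ (Set.Ici s)).toReal := by
    have hi1 : IntegrableOn (fun p => p - s) (Set.Ici s) μ :=
      (hμint.sub (integrable_const s)).integrableOn
    have hi2 : IntegrableOn (fun _ => s - r) (Set.Ici s) μ :=
      (integrable_const (s - r)).integrableOn
    have : (∫ p in Set.Ici s, (p - r) ∂μ)
        = ∫ p in Set.Ici s, ((p - s) + (s - r)) ∂μ := by
      apply setIntegral_congr_fun measurableSet_Ici
      exact fun p _ => by ring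
    rw [this, integral_add hi1 hi2, setIntegral_const, smul_eq_mul, mul_comm]; rfl
  have step2 : (∫ p in Set.Ici s, (p - s) ∂μ) = ∫ p, max (p - s) 0 ∂μ := by
    have hint2 : Integrable (fun p => max (p - s) 0) μ :=
      (hμint.sub (integrable_const s)).pos_part
    rw [← integral_add_compl measurableSet_Ici hint2]
    have e1 : (∫ p in Set.Ici s, max (p - s) 0 ∂μ) = ∫ p in Set.Ici s, (p - s) ∂μ := by
      apply setIntegral_congr_fun measurableSet_Ici
      exact fun p hp => max_eq_left (by simp only [Set.mem_Ici] at hp; linarith)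
    have e2 : (∫ p in (Set.Ici s)ᶜ, max (p - s) 0 ∂μ) = 0 := by
      rw [Set.compl_Ici]
      have : ∀ p ∈ Set.Iio s, max (p - s) 0 = (0:ℝ) := by
        intro p hp
        exact max_eq_right (by simp only [Set.mem_Iio] at hp; linarith)
      rw [setIntegral_congr_fun measurableSet_Iio this, integral_zero]
    rw [e1, e2, add_zero]
  have step3 := tail_integral_eq hμint s
  rcases le_total c (quant μ β) with hc | hc
  · -- s = quant μ β
    have hsq : s = quant μ β := max_eq_left hc
    have hFcc : Fc μ c ≤ β := by rw [← hFq]; exact Fc_mono hc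
    have hDc : Dd μ β c = 1 - β := by
      simp only [Dd]
      rw [max_eq_left hFcc]
    have htail : (∫ t in Set.Ioi (quant μ β), (1 - Fc μ t)) = Bb μ β (quant μ β) := by
      rw [Bb]
      apply setIntegral_congr_fun measurableSet_Ioi
      intro t ht
      simp only [Set.mem_Ioi] at ht
      have : β ≤ Fc μ t := by rw [← hFq]; exact Fc_mono ht.le
      simp only [Dd]
      rw [max_eq_right this]
    have hBsplit := Bb_split hatom hμint hβ1.le (c := c) (c' := quant μ β) hc
    have hIoc : (∫ t in Set.Ioc c (quant μ β), Dd μ β t) = (quant μ β - c) * (1 - β) := by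
      have : ∀ t ∈ Set.Ioc c (quant μ β), Dd μ β t = (1 - β) := by
        intro t ht
        have : Fc μ t ≤ β := by rw [← hFq]; exact Fc_mono ht.2
        simp only [Dd]
        rw [max_eq_left this]
      rw [setIntegral_congr_fun measurableSet_Ioc this, setIntegral_const, smul_eq_mul,
        Real.volume_real_Ioc_of_le hc]
    have hIci : (μ (Set.Ici s)).toReal = 1 - β := by
      rw [meas_Ici_toReal hatom, hsq, hFq]
    rw [step1, step2, step3, hsq] at *
    rw [htail, hIci, hDc, hBsplit, hIoc]
    ring
  · -- s = c
    have hsq : s = c := max_eq_right hc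
    have hFcc : β ≤ Fc μ c := by rw [← hFq]; exact Fc_mono hc
    have hDc : Dd μ β c = 1 - Fc μ c := by
      simp only [Dd]; rw [max_eq_right hFcc]
    have htail : (∫ t in Set.Ioi c, (1 - Fc μ t)) = Bb μ β c := by
      rw [Bb]
      apply setIntegral_congr_fun measurableSet_Ioi
      intro t ht
      simp only [Set.mem_Ioi] at ht
      have : β ≤ Fc μ t := le_trans hFcc (Fc_mono ht.le)
      simp only [Dd]
      rw [max_eq_right this]
    have hIci : (μ (Set.Ici s)).toReal = 1 - Fc μ c := by
      rw [meas_Ici_toReal hatom, hsq]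
    rw [step1, step2, step3, hsq] at *
    rw [htail, hIci, hDc]

section Bridge

variable {Ω : Type*} [MeasurableSpace Ω] {P : Measure Ω} [IsProbabilityMeasure P]
  {pT : Ω → ℝ}

lemma VaR_eq_quant (hmeas : Measurable pT) (u : ℝ) :
    VaR P pT u = quant (Measure.map pT P) u := by
  unfold VaR quant
  congr 1
  ext z
  rw [Set.mem_setOf_eq, Set.mem_setOf_eq, Fc,
    Measure.map_apply hmeas measurableSet_Iic]
  rfl

lemma VaR_comp (hmeas : Measurable pT)
    (hatom : ∀ t : ℝ, (Measure.map pT P) {t} = 0)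
    (g : ℝ → ℝ) (hg : Monotone g) (hgc : Continuous g)
    {u : ℝ} (hu0 : 0 < u) (hu1 : u < 1) :
    VaR P (fun ω => g (pT ω)) u = g (quant (Measure.map pT P) u) := by
  haveI : IsProbabilityMeasure (Measure.map pT P) :=
    Measure.isProbabilityMeasure_map hmeas.aemeasurable
  set μ := Measure.map pT P with hμ
  have key : ∀ z : ℝ, (u ≤ (P {ω | g (pT ω) ≤ z}).toReal) ↔ g (quant μ u) ≤ z := by
    intro z
    have hPz : P {ω | g (pT ω) ≤ z} = μ {p | g p ≤ z} := by
      rw [hμ, Measure.map_apply hmeas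
        (show MeasurableSet {p : ℝ | g p ≤ z} from hgc.measurable measurableSet_Iic)]
      rfl
    rw [hPz]
    by_cases hne : {p : ℝ | g p ≤ z}.Nonempty
    · by_cases hall : ∀ p : ℝ, g p ≤ z
      · have : {p : ℝ | g p ≤ z} = Set.univ := Set.eq_univ_of_forall hall
        rw [this]
        simp only [measure_univ, ENNReal.toReal_one]
        constructor
        · intro _; exact hall _
        · intro _; exact hu1.le
      · push_neg at hall
        obtain ⟨w, hw⟩ := hall
        have hdown : ∀ p p' : ℝ, p' ≤ p → g p ≤ z → g p' ≤ z :=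
          fun p p' hpp hp => le_trans (hg hpp) hp
        have hbdd : BddAbove {p : ℝ | g p ≤ z} := by
          refine ⟨w, fun y hy => ?_⟩
          by_contra hyw
          push_neg at hyw
          exact absurd (hdown y w hyw.le hy) (not_le.2 hw)
        have hcl : IsClosed {p : ℝ | g p ≤ z} := isClosed_le hgc continuous_const
        have hsup_mem : sSup {p : ℝ | g p ≤ z} ∈ {p : ℝ | g p ≤ z} :=
          hcl.csSup_mem hne hbdd
        have hSeq : {p : ℝ | g p ≤ z} = Set.Iic (sSup {p : ℝ | g p ≤ z}) := by
          apply Set.Subset.antisymm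
          · exact fun y hy => le_csSup hbdd hy
          · exact fun y hy => hdown _ _ hy hsup_mem
        rw [hSeq]
        constructor
        · intro h
          have hq : quant μ u ≤ sSup {p : ℝ | g p ≤ z} :=
            (quant_galois hatom hu0 hu1 _).2 h
          exact le_trans (hg hq) hsup_mem
        · intro h
          have hmem : quant μ u ∈ {p : ℝ | g p ≤ z} := h
          have hq : quant μ u ≤ sSup {p : ℝ | g p ≤ z} := le_csSup hbdd hmem
          exact (quant_galois hatom hu0 hu1 _).1 hq
    · have hz : {p : ℝ | g p ≤ z} = ∅ := Set.not_nonempty_iff_eq_empty.1 hne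
      rw [hz]
      simp only [measure_empty, ENNReal.toReal_zero]
      constructor
      · intro h; linarith
      · intro h
        exact absurd (show quant μ u ∈ {p : ℝ | g p ≤ z} from h)
          (by rw [hz]; exact Set.notMem_empty _)
  have hset : {z : ℝ | u ≤ (P {ω | g (pT ω) ≤ z}).toReal} = Set.Ici (g (quant μ u)) := by
    ext z
    rw [Set.mem_setOf_eq, key z]
    rfl
  rw [VaR, hset, csInf_Ici]

end Bridge

noncomputable def Gf (μ : Measure ℝ) (β qi Ei pτ x : ℝ) : ℝ :=
  (qi - x) * Bb μ β (pτ + Ei / (qi - x))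

noncomputable def Hf (μ : Measure ℝ) (β qi Ei pτ x : ℝ) : ℝ :=
  if x = qi then 0
  else Bb μ β (pτ + Ei / (qi - x))
        + (Ei / (qi - x)) * Dd μ β (pτ + Ei / (qi - x))

lemma Gf_at_top (β qi Ei pτ : ℝ) : Gf μ β qi Ei pτ qi = 0 := by
  simp [Gf]

lemma Gf_nonneg {β : ℝ} (hβ : β ≤ 1) {qi x : ℝ} (Ei pτ : ℝ) (hx : x ≤ qi) :
    0 ≤ Gf μ β qi Ei pτ x :=
  mul_nonneg (by linarith) (Bb_nonneg hβ _)

lemma Hf_nonneg (hatom : ∀ t : ℝ, μ {t} = 0) {β : ℝ} (hβ : β ≤ 1)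
    {qi Ei x : ℝ} (pτ : ℝ) (hEi : 0 ≤ Ei) (hx : x ≤ qi) :
    0 ≤ Hf μ β qi Ei pτ x := by
  rw [Hf]
  by_cases h : x = qi
  · rw [if_pos h]
  · rw [if_neg h]
    have hq : 0 < qi - x := by
      rcases lt_or_eq_of_le hx with h' | h'
      · linarith
      · exact absurd h' h
    have : 0 ≤ Ei / (qi - x) := div_nonneg hEi hq.le
    have := Bb_nonneg (μ := μ) hβ (pτ + Ei / (qi - x))
    have := Dd_nonneg (μ := μ) hβ (pτ + Ei / (qi - x))
    positivity

lemma factA (hatom : ∀ t : ℝ, μ {t} = 0) (hμint : Integrable (fun p : ℝ => p) μ)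
    {β : ℝ} (hβ1 : β ≤ 1) {qi Ei pτ x y : ℝ} (hEi : 0 < Ei)
    (hx : x ∈ Set.Icc 0 qi) (hy : y ∈ Set.Icc 0 qi) :
    Gf μ β qi Ei pτ y - Gf μ β qi Ei pτ x ≥ -(Hf μ β qi Ei pτ x) * (y - x) := by
  by_cases hxq : x = qi
  · rw [Hf, if_pos hxq, hxq, Gf_at_top]
    have := Gf_nonneg (μ := μ) hβ1 Ei pτ hy.2
    simp only [neg_zero, zero_mul]
    linarith
  · have hax : 0 < qi - x := by
      rcases lt_or_eq_of_le hx.2 with h' | h'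
      · linarith
      · exact absurd h' hxq
    rw [Hf, if_neg hxq]
    set c := pτ + Ei / (qi - x) with hc
    by_cases hyq : y = qi
    · rw [hyq, Gf_at_top]
      have h1 : (qi - x) * (Ei / (qi - x)) = Ei := by
        field_simp
      have hB := Bb_nonneg (μ := μ) hβ1 c
      have hD := Dd_nonneg (μ := μ) hβ1 c
      simp only [Gf, ← hc]
      nlinarith
    · have hay : 0 < qi - y := by
        rcases lt_or_eq_of_le hy.2 with h' | h'
        · linarith
        · exact absurd h' hyq
      set c' := pτ + Ei / (qi - y) with hc'
      have ht := Bb_tangent hatom hμint hβ1 c c'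
      have hD := Dd_nonneg (μ := μ) hβ1 c
      have hB' := Bb_nonneg (μ := μ) hβ1 c'
      have ht' : (qi - y) * (Bb μ β c - (c' - c) * Dd μ β c) ≤ (qi - y) * Bb μ β c' :=
        mul_le_mul_of_nonneg_left ht hay.le
      have h3 : (qi - x) * (Ei / (qi - x)) * Dd μ β c = Ei * Dd μ β c := by
        rw [mul_div_cancel₀ Ei hax.ne']
      have h4 : (qi - y) * (Ei / (qi - y)) * Dd μ β c = Ei * Dd μ β c := by
        rw [mul_div_cancel₀ Ei hay.ne']
      simp only [Gf, ← hc, ← hc']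
      have hcc : c' - c = Ei / (qi - y) - Ei / (qi - x) := by
        rw [hc', hc]; ring
      rw [hcc] at ht'
      nlinarith [ht', hD, h3, h4]

lemma Hf_continuousAt (hatom : ∀ t : ℝ, μ {t} = 0) (hμint : Integrable (fun p : ℝ => p) μ)
    {β : ℝ} (hβ0 : 0 ≤ β) (hβ1 : β ≤ 1) {qi Ei pτ x : ℝ} (hxq : x < qi) :
    ContinuousAt (Hf μ β qi Ei pτ) x := by
  have hev : (fun y => Bb μ β (pτ + Ei / (qi - y))
      + (Ei / (qi - y)) * Dd μ β (pτ + Ei / (qi - y))) =ᶠ[𝓝 x] Hf μ β qi Ei pτ := by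
    filter_upwards [Iio_mem_nhds hxq] with y hy
    rw [Hf, if_neg (ne_of_lt hy)]
  apply ContinuousAt.congr _ hev
  have hc : ContinuousAt (fun y => pτ + Ei / (qi - y)) x := by
    apply continuousAt_const.add
    exact continuousAt_const.div (continuous_const.sub continuous_id).continuousAt
      (sub_ne_zero.2 (ne_of_gt hxq))
  have hr : ContinuousAt (fun y => Ei / (qi - y)) x :=
    continuousAt_const.div (continuous_const.sub continuous_id).continuousAt
      (sub_ne_zero.2 (ne_of_gt hxq))
  exact (((Bb_continuous hatom hμint hβ0 hβ1).continuousAt).comp hc).add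
    (hr.mul (((Dd_continuous hatom).continuousAt).comp hc))

lemma Hf_bound (hatom : ∀ t : ℝ, μ {t} = 0) (hμint : Integrable (fun p : ℝ => p) μ)
    {β : ℝ} (hβ1 : β ≤ 1) {qi Ei pτ y : ℝ} (hEi : 0 < Ei) (hy : y < qi) :
    Hf μ β qi Ei pτ y ≤ 3 * Bb μ β (pτ + Ei / 2 * (qi - y)⁻¹) := by
  have ha : 0 < qi - y := by linarith
  set r := Ei / (qi - y) with hrdef
  have hrpos : 0 < r := div_pos hEi ha
  set c := pτ + r with hcdef
  set w := pτ + Ei / 2 * (qi - y)⁻¹ with hwdef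
  have hwc : w = pτ + r / 2 := by
    rw [hwdef, hrdef]
    congr 1
    field_simp
  have hwlec : w ≤ c := by rw [hwc, hcdef]; linarith
  have hBanti : Bb μ β c ≤ Bb μ β w := Bb_antitone hatom hμint hβ1 hwlec
  have hsplit := Bb_split hatom hμint hβ1 (c := w) (c' := c) hwlec
  have hge := integral_Ioc_Dd_ge hatom hμint hβ1 (c := w) (c' := c) hwlec
  have hcw : c - w = r / 2 := by rw [hwc, hcdef]; ring
  have hBc := Bb_nonneg (μ := μ) hβ1 c
  rw [Hf, if_neg (ne_of_lt hy), ← hrdef, ← hcdef]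
  rw [hcw] at hge
  nlinarith

lemma Hf_tendsto_top (hatom : ∀ t : ℝ, μ {t} = 0) (hμint : Integrable (fun p : ℝ => p) μ)
    {β : ℝ} (hβ1 : β ≤ 1) {qi Ei pτ : ℝ} (hEi : 0 < Ei) :
    Tendsto (fun ε => Hf μ β qi Ei pτ (qi - ε)) (𝓝[>] (0:ℝ)) (𝓝 0) := by
  have hg : Tendsto (fun ε : ℝ => 3 * Bb μ β (pτ + Ei / 2 * ε⁻¹)) (𝓝[>] (0:ℝ)) (𝓝 0) := by
    have h1 : Tendsto (fun ε : ℝ => Ei / 2 * ε⁻¹) (𝓝[>] (0:ℝ)) atTop :=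
      (tendsto_inv_nhdsGT_zero).const_mul_atTop (half_pos hEi)
    have h2 : Tendsto (fun ε : ℝ => pτ + Ei / 2 * ε⁻¹) (𝓝[>] (0:ℝ)) atTop :=
      tendsto_atTop_add_const_left _ pτ h1
    have h3 := (Bb_tendsto_atTop hatom hμint hβ1).comp h2
    have := h3.const_mul (3:ℝ)
    simpa using this
  apply squeeze_zero'
  · filter_upwards [self_mem_nhdsWithin] with ε hε
    have hε' : (0:ℝ) < ε := hε
    exact Hf_nonneg hatom hβ1 pτ hEi.le (by linarith)
  · filter_upwards [self_mem_nhdsWithin] with ε hε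
    have hε' : (0:ℝ) < ε := hε
    have := Hf_bound hatom hμint hβ1 (pτ := pτ) hEi (show qi - ε < qi by linarith)
    simpa using this
  · exact hg

lemma shortfall_eq {qi pei mi pτ Ei x : ℝ} (hE : Ei = qi * (pei - pτ) + mi)
    (hEpos : 0 < Ei) (hxq : x ≤ qi) (p : ℝ) :
    shortfall qi pei mi pτ x p = (qi - x) * max (p - (pτ + Ei / (qi - x))) 0 := by
  by_cases h : x = qi
  · rw [h]
    have heq : equity qi pei mi pτ qi p = Ei := by rw [equity, hE]; ring
    rw [shortfall, heq, sub_self, zero_mul, max_eq_right (by linarith)]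
  · have hlt : x < qi := lt_of_le_of_ne hxq h
    have hpos : 0 < qi - x := by linarith
    rw [shortfall, equity,
      show (qi - x) * max (p - (pτ + Ei / (qi - x))) 0
        = max ((qi - x) * (p - (pτ + Ei / (qi - x)))) ((qi - x) * 0) from
        mul_max_of_nonneg _ _ hpos.le, mul_zero]
    congr 1
    rw [hE]
    field_simp
    ring

lemma zep_eq {qi pei mi pτ Ei x : ℝ} (hE : Ei = qi * (pei - pτ) + mi) (hlt : x < qi) :
    zeroEquityPrice qi pei mi pτ x = pτ + Ei / (qi - x) := by
  have hne : qi - x ≠ 0 := sub_ne_zero.2 (ne_of_gt hlt)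
  rw [zeroEquityPrice, hE]
  field_simp
  ring

lemma totalLoss_eq {n : ℕ} (q pe m : Fin n → ℝ) (pτ : ℝ) (E : Fin n → ℝ)
    (hE : ∀ i, E i = q i * (pe i - pτ) + m i) (hEpos : ∀ i, 0 < E i)
    (x : Fin n → ℝ) (hx : ∀ i, 0 ≤ x i ∧ x i ≤ q i) (p : ℝ) :
    totalLoss q pe m pτ x p
      = ∑ i, (q i - x i) * max (p - (pτ + E i / (q i - x i))) 0 := by
  rw [totalLoss]
  exact Finset.sum_congr rfl fun i _ => shortfall_eq (hE i) (hEpos i) (hx i).2 p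

section MainBridge

variable {Ω : Type*} [MeasurableSpace Ω] {P : Measure Ω} [IsProbabilityMeasure P]
  {pT : Ω → ℝ}

lemma map_integrable (hmeas : Measurable pT) (hint : Integrable pT P) :
    Integrable (fun p : ℝ => p) (Measure.map pT P) := by
  have h : Integrable (id : ℝ → ℝ) (Measure.map pT P) :=
    (integrable_map_measure aestronglyMeasurable_id hmeas.aemeasurable).2 hint
  exact h

lemma hBeta_eq_Hf (hmeas : Measurable pT) (hint : Integrable pT P)
    (hatom : ∀ t : ℝ, (Measure.map pT P) {t} = 0)
    {β : ℝ} (hβ0 : 0 < β) (hβ1 : β < 1)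
    {qi pei mi pτ Ei x : ℝ} (hE : Ei = qi * (pei - pτ) + mi) (hEpos : 0 < Ei)
    (hxq : x ≤ qi) :
    hBeta P pT qi pei mi pτ (VaR P pT β) x = Hf (Measure.map pT P) β qi Ei pτ x := by
  haveI : IsProbabilityMeasure (Measure.map pT P) :=
    Measure.isProbabilityMeasure_map hmeas.aemeasurable
  set μ := Measure.map pT P with hμ
  by_cases h : x = qi
  · rw [hBeta, if_pos h, Hf, if_pos h]
  · have hlt : x < qi := lt_of_le_of_ne hxq h
    rw [hBeta, if_neg h, Hf, if_neg h, zep_eq hE hlt, VaR_eq_quant hmeas]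
    set c := pτ + Ei / (qi - x) with hc
    set s := max (quant μ β) c with hs
    have hmap : (∫ ω in {ω | s ≤ pT ω}, (pT ω - pτ) ∂P)
        = ∫ p in Set.Ici s, (p - pτ) ∂μ := by
      rw [hμ]
      exact (setIntegral_map (f := fun y : ℝ => y - pτ) (g := pT) measurableSet_Ici
        ((continuous_id.sub continuous_const).aestronglyMeasurable) hmeas.aemeasurable).symm
    rw [hmap, tail_h_eq hatom (map_integrable hmeas hint) hβ0 hβ1 c pτ]
    rw [hc]
    congr 2
    ring

lemma CVaR_eq {n : ℕ} (q pe m : Fin n → ℝ) (pτ : ℝ) (E : Fin n → ℝ)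
    (hE : ∀ i, E i = q i * (pe i - pτ) + m i) (hEpos : ∀ i, 0 < E i)
    (hmeas : Measurable pT) (hint : Integrable pT P)
    (hatom : ∀ t : ℝ, (Measure.map pT P) {t} = 0)
    {β : ℝ} (hβ0 : 0 < β) (hβ1 : β < 1)
    (x : Fin n → ℝ) (hx : ∀ i, 0 ≤ x i ∧ x i ≤ q i) :
    CVaR P (fun ω => totalLoss q pe m pτ x (pT ω)) β
      = (1 - β)⁻¹ * ∑ i, Gf (Measure.map pT P) β (q i) (E i) pτ (x i) := by
  haveI : IsProbabilityMeasure (Measure.map pT P) :=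
    Measure.isProbabilityMeasure_map hmeas.aemeasurable
  set μ := Measure.map pT P with hμ
  have hμint : Integrable (fun p : ℝ => p) μ := map_integrable hmeas hint
  have gmono : Monotone (fun p => totalLoss q pe m pτ x p) := by
    intro a b hab
    show totalLoss q pe m pτ x a ≤ totalLoss q pe m pτ x b
    rw [totalLoss_eq q pe m pτ E hE hEpos x hx, totalLoss_eq q pe m pτ E hE hEpos x hx]
    apply Finset.sum_le_sum
    intro i _
    apply mul_le_mul_of_nonneg_left _ (by linarith [(hx i).2] : (0:ℝ) ≤ q i - x i)
    exact max_le_max (by linarith) le_rfl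
  have gcont : Continuous (fun p => totalLoss q pe m pτ x p) := by
    unfold totalLoss shortfall equity
    apply continuous_finset_sum
    intro i _
    apply Continuous.max _ continuous_const
    apply Continuous.neg
    apply Continuous.add _ continuous_const
    apply Continuous.sub
    · exact continuous_const.mul (continuous_const.sub continuous_id)
    · exact continuous_const.mul (continuous_const.sub continuous_id)
  rw [CVaR]
  congr 1
  rw [intervalIntegral.integral_of_le hβ1.le, integral_Ioc_eq_integral_Ioo]
  have step1 : (∫ u in Set.Ioo β 1, VaR P (fun ω => totalLoss q pe m pτ x (pT ω)) u)
      = ∫ u in Set.Ioo β 1,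
          ∑ i, (q i - x i) * max (quant μ u - (pτ + E i / (q i - x i))) 0 := by
    apply setIntegral_congr_fun measurableSet_Ioo
    intro u hu
    rw [show (fun ω => totalLoss q pe m pτ x (pT ω))
        = (fun ω => (fun p => totalLoss q pe m pτ x p) (pT ω)) from rfl]
    rw [VaR_comp hmeas hatom _ gmono gcont (lt_trans hβ0 hu.1) hu.2]
    exact totalLoss_eq q pe m pτ E hE hEpos x hx _
  rw [step1]
  rw [integral_finset_sum]
  · apply Finset.sum_congr rfl
    intro i _
    rw [integral_const_mul, quant_integral hatom hμint hβ0 hβ1]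
    rfl
  · intro i _
    exact (quant_integrableOn hatom hμint hβ0 hβ1 (pτ + E i / (q i - x i))).const_mul _

end MainBridge

lemma sum_two_update {n : ℕ} (g : Fin n → ℝ → ℝ) (x : Fin n → ℝ) {i j : Fin n}
    (hij : i ≠ j) (a b : ℝ) :
    (∑ k, g k (Function.update (Function.update x i a) j b k))
      = (∑ k, g k (x k)) + (g i a - g i (x i)) + (g j b - g j (x j)) := by
  have hyi : Function.update (Function.update x i a) j b i = a := by
    rw [Function.update_of_ne hij, Function.update_self]
  have hyj : Function.update (Function.update x i a) j b j = b := Function.update_self _ _ _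
  have hyk : ∀ k, k ≠ i → k ≠ j → Function.update (Function.update x i a) j b k = x k := by
    intro k hki hkj
    rw [Function.update_of_ne hkj, Function.update_of_ne hki]
  have hcongr : ∀ k ∈ Finset.univ, g k (Function.update (Function.update x i a) j b k)
      = g k (x k) + ((if k = i then g i a - g i (x i) else 0)
        + (if k = j then g j b - g j (x j) else 0)) := by
    intro k _
    by_cases hki : k = i
    · subst hki
      rw [hyi, if_pos rfl, if_neg hij]
      ring
    · by_cases hkj : k = j
      · subst hkj
        rw [hyj, if_neg hki, if_pos rfl]
        ring
      · rw [hyk k hki hkj, if_neg hki, if_neg hkj]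
        ring
  rw [Finset.sum_congr rfl hcongr, Finset.sum_add_distrib, Finset.sum_add_distrib,
    Finset.sum_ite_eq' Finset.univ i, Finset.sum_ite_eq' Finset.univ j]
  simp only [Finset.mem_univ, if_true]
  ring

end ADLKKT

/-- KKT characterization of CVaR-optimality: `x★ ∈ X` minimizes
`x ↦ CVaR_β(L(x, p_T))` over the feasible set if and only if there exists `θ★ ∈ ℝ` such
that for each `i`: interior coordinates satisfy `h_β(x★_i) = θ★`, coordinates at the
lower bound satisfy `h_β(0) ≤ θ★`, and coordinates at the upper bound satisfy
`h_β(q_i) ≥ θ★`. -/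
theorem CVaR_KKT_characterization {n : ℕ} [NeZero n] {Ω : Type*} [MeasurableSpace Ω]
    (P : Measure Ω) [IsProbabilityMeasure P]
    (q pe m : Fin n → ℝ) (pτ Q : ℝ)
    (hq : ∀ i, 0 < q i) (hm : ∀ i, 0 ≤ m i) (hpτ : 0 < pτ)
    (hQ0 : 0 < Q) (hQtop : Q < ∑ i, q i)
    (E : Fin n → ℝ) (hE : ∀ i, E i = q i * (pe i - pτ) + m i) (hEpos : ∀ i, 0 < E i)
    (pT : Ω → ℝ) (hmeas : Measurable pT) (hint : Integrable pT P)
    (fT : ℝ → ℝ)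
    (hdens : Measure.map pT P = volume.withDensity fun p => ENNReal.ofReal (fT p))
    (hfT : ∀ p, pτ ≤ p → 0 < fT p)
    (β : ℝ) (hβ : β ∈ Set.Ioo (0 : ℝ) 1)
    (xstar : Fin n → ℝ) (hxstar : xstar ∈ feas q Q) :
    (∀ x ∈ feas q Q,
      CVaR P (fun ω => totalLoss q pe m pτ xstar (pT ω)) β
        ≤ CVaR P (fun ω => totalLoss q pe m pτ x (pT ω)) β)
    ↔ ∃ θstar : ℝ, ∀ i,
        (0 < xstar i → xstar i < q i →
          hBeta P pT (q i) (pe i) (m i) pτ (VaR P pT β) (xstar i) = θstar)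
        ∧ (xstar i = 0 →
          hBeta P pT (q i) (pe i) (m i) pτ (VaR P pT β) 0 ≤ θstar)
        ∧ (xstar i = q i →
          θstar ≤ hBeta P pT (q i) (pe i) (m i) pτ (VaR P pT β) (q i)) := by
  obtain ⟨hβ0, hβ1⟩ := hβ
  haveI : IsProbabilityMeasure (Measure.map pT P) :=
    Measure.isProbabilityMeasure_map hmeas.aemeasurable
  set μ := Measure.map pT P with hμ
  have hatom : ∀ t : ℝ, μ {t} = 0 := by
    intro t
    rw [hdens, withDensity_apply _ (measurableSet_singleton t),
      Measure.restrict_eq_zero.2 Real.volume_singleton, lintegral_zero_measure]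
  have hμint : Integrable (fun p : ℝ => p) μ := ADLKKT.map_integrable hmeas hint
  have hβ1' : β ≤ 1 := hβ1.le
  have hB : ∀ i, ∀ x : ℝ, x ≤ q i →
      hBeta P pT (q i) (pe i) (m i) pτ (VaR P pT β) x = ADLKKT.Hf μ β (q i) (E i) pτ x :=
    fun i x hx => ADLKKT.hBeta_eq_Hf hmeas hint hatom hβ0 hβ1 (hE i) (hEpos i) hx
  have hCV : ∀ x ∈ feas q Q, CVaR P (fun ω => totalLoss q pe m pτ x (pT ω)) β
      = (1 - β)⁻¹ * ∑ i, ADLKKT.Gf μ β (q i) (E i) pτ (x i) :=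
    fun x hx => ADLKKT.CVaR_eq q pe m pτ E hE hEpos hmeas hint hatom hβ0 hβ1 x hx.2
  have hinvpos : (0:ℝ) < (1 - β)⁻¹ := inv_pos.2 (by linarith)
  have hred : (∀ x ∈ feas q Q,
      CVaR P (fun ω => totalLoss q pe m pτ xstar (pT ω)) β
        ≤ CVaR P (fun ω => totalLoss q pe m pτ x (pT ω)) β)
      ↔ (∀ x ∈ feas q Q, (∑ i, ADLKKT.Gf μ β (q i) (E i) pτ (xstar i))
          ≤ ∑ i, ADLKKT.Gf μ β (q i) (E i) pτ (x i)) := by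
    constructor
    · intro h x hx
      have h2 := h x hx
      rw [hCV xstar hxstar, hCV x hx] at h2
      exact le_of_mul_le_mul_left h2 hinvpos
    · intro h x hx
      rw [hCV xstar hxstar, hCV x hx]
      exact mul_le_mul_of_nonneg_left (h x hx) hinvpos.le
  rw [hred]
  constructor
  · intro hG
    have hxb := hxstar.2
    have hpair : ∀ i j, i ≠ j → 0 < xstar j → xstar i < q i →
        ADLKKT.Hf μ β (q i) (E i) pτ (xstar i)
          ≤ ADLKKT.Hf μ β (q j) (E j) pτ (xstar j) := by
      intro i j hij hjpos hiq
      set ε₀ := min (q i - xstar i) (xstar j) with hε₀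
      have hε₀pos : 0 < ε₀ := lt_min (by linarith) hjpos
      have key : ∀ ε : ℝ, 0 < ε → ε < ε₀ →
          ADLKKT.Hf μ β (q i) (E i) pτ (xstar i + ε)
            ≤ ADLKKT.Hf μ β (q j) (E j) pτ (xstar j - ε) := by
        intro ε hε hεlt
        have hm1 := min_le_left (q i - xstar i) (xstar j)
        have hm2 := min_le_right (q i - xstar i) (xstar j)
        have hεi : xstar i + ε ≤ q i := by rw [hε₀] at hεlt; linarith
        have hεj : 0 ≤ xstar j - ε := by rw [hε₀] at hεlt; linarith
        set y : Fin n → ℝ :=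
          Function.update (Function.update xstar i (xstar i + ε)) j (xstar j - ε) with hydef
        have hyfeas : y ∈ feas q Q := by
          constructor
          · have hs := ADLKKT.sum_two_update (fun _ z => z) xstar hij
              (xstar i + ε) (xstar j - ε)
            rw [hydef, hs, hxstar.1]
            ring
          · intro k
            by_cases hki : k = i
            · subst hki
              rw [hydef, Function.update_of_ne hij, Function.update_self]
              exact ⟨by linarith [(hxb k).1], hεi⟩
            · by_cases hkj : k = j
              · subst hkj
                rw [hydef, Function.update_self]
                exact ⟨hεj, by linarith [(hxb k).2]⟩
              · rw [hydef, Function.update_of_ne hkj, Function.update_of_ne hki]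
                exact hxb k
        have hGy := hG y hyfeas
        have hdiff := ADLKKT.sum_two_update
          (fun k z => ADLKKT.Gf μ β (q k) (E k) pτ z) xstar hij (xstar i + ε) (xstar j - ε)
        rw [hydef] at hGy
        have hA1 := ADLKKT.factA hatom hμint hβ1' (hEpos i)
          (x := xstar i + ε) (y := xstar i) (pτ := pτ) (qi := q i)
          ⟨by linarith [(hxb i).1], hεi⟩ ⟨(hxb i).1, (hxb i).2⟩
        have hA2 := ADLKKT.factA hatom hμint hβ1' (hEpos j)
          (x := xstar j - ε) (y := xstar j) (pτ := pτ) (qi := q j)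
          ⟨hεj, by linarith [(hxb j).2]⟩ ⟨(hxb j).1, (hxb j).2⟩
        have hcomb : ε * ADLKKT.Hf μ β (q i) (E i) pτ (xstar i + ε)
            ≤ ε * ADLKKT.Hf μ β (q j) (E j) pτ (xstar j - ε) := by
          nlinarith [hGy, hdiff, hA1, hA2]
        exact le_of_mul_le_mul_left hcomb hε
      have hlim1 : Tendsto (fun ε => ADLKKT.Hf μ β (q i) (E i) pτ (xstar i + ε))
          (𝓝[>] (0:ℝ)) (𝓝 (ADLKKT.Hf μ β (q i) (E i) pτ (xstar i))) := by
        have hc := ADLKKT.Hf_continuousAt (Ei := E i) (pτ := pτ)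
          hatom hμint hβ0.le hβ1' hiq
        have hm : Tendsto (fun ε : ℝ => xstar i + ε) (𝓝[>] (0:ℝ)) (𝓝 (xstar i)) := by
          have h1 : Tendsto (fun ε : ℝ => xstar i + ε) (𝓝 (0:ℝ)) (𝓝 (xstar i + 0)) :=
            (continuous_const.add continuous_id).tendsto 0
          simpa using h1.mono_left nhdsWithin_le_nhds
        exact hc.tendsto.comp hm
      have hlim2 : Tendsto (fun ε => ADLKKT.Hf μ β (q j) (E j) pτ (xstar j - ε))
          (𝓝[>] (0:ℝ)) (𝓝 (ADLKKT.Hf μ β (q j) (E j) pτ (xstar j))) := by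
        rcases lt_or_eq_of_le (hxb j).2 with hjq | hjq
        · have hc := ADLKKT.Hf_continuousAt (Ei := E j) (pτ := pτ)
            hatom hμint hβ0.le hβ1' hjq
          have hm : Tendsto (fun ε : ℝ => xstar j - ε) (𝓝[>] (0:ℝ)) (𝓝 (xstar j)) := by
            have h1 : Tendsto (fun ε : ℝ => xstar j - ε) (𝓝 (0:ℝ)) (𝓝 (xstar j - 0)) :=
              (continuous_const.sub continuous_id).tendsto 0
            simpa using h1.mono_left nhdsWithin_le_nhds
          exact hc.tendsto.comp hm
        · rw [hjq]
          have h0 : ADLKKT.Hf μ β (q j) (E j) pτ (q j) = 0 := by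
            rw [ADLKKT.Hf, if_pos rfl]
          rw [h0]
          exact ADLKKT.Hf_tendsto_top hatom hμint hβ1' (hEpos j)
      refine le_of_tendsto_of_tendsto hlim1 hlim2 ?_
      filter_upwards [Ioo_mem_nhdsGT_of_mem (Set.left_mem_Ico.2 hε₀pos)] with ε hε
      exact key ε hε.1 hε.2
    by_cases hcap : ∃ j, xstar j = q j
    · obtain ⟨j, hj⟩ := hcap
      have hjpos : 0 < xstar j := by rw [hj]; exact hq j
      have hHj0 : ADLKKT.Hf μ β (q j) (E j) pτ (xstar j) = 0 := by
        rw [hj, ADLKKT.Hf, if_pos rfl]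
      have hzero : ∀ i, xstar i < q i → ADLKKT.Hf μ β (q i) (E i) pτ (xstar i) = 0 := by
        intro i hiq
        have hij : i ≠ j := by
          intro h
          rw [h, hj] at hiq
          exact lt_irrefl _ hiq
        have hle := hpair i j hij hjpos hiq
        rw [hHj0] at hle
        have hge := ADLKKT.Hf_nonneg hatom hβ1' pτ (hEpos i).le (hxb i).2
        linarith
      refine ⟨0, fun i => ⟨?_, ?_, ?_⟩⟩
      · intro _ hlt
        rw [hB i _ (hxb i).2]
        exact hzero i hlt
      · intro h0
        rw [hB i 0 (hq i).le]
        have hz := hzero i (by rw [h0]; exact hq i)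
        rw [h0] at hz
        exact le_of_eq hz
      · intro _
        rw [hB i _ le_rfl, ADLKKT.Hf, if_pos rfl]
    · push_neg at hcap
      have hltall : ∀ i, xstar i < q i := fun i => lt_of_le_of_ne (hxb i).2 (hcap i)
      have hex : ∃ j, 0 < xstar j := by
        by_contra h
        push_neg at h
        have hzz : ∀ i, xstar i = 0 := fun i => le_antisymm (h i) (hxb i).1
        have hzsum : (∑ i, xstar i) = 0 := by
          rw [Finset.sum_congr rfl fun i _ => hzz i, Finset.sum_const, smul_zero]
        rw [hxstar.1] at hzsum
        linarith
      obtain ⟨j, hjpos⟩ := hex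
      refine ⟨ADLKKT.Hf μ β (q j) (E j) pτ (xstar j), fun i => ⟨?_, ?_, ?_⟩⟩
      · intro hpos hltq
        rw [hB i _ (hxb i).2]
        by_cases hij : i = j
        · rw [hij]
        · exact le_antisymm (hpair i j hij hjpos hltq)
            (hpair j i (Ne.symm hij) hpos (hltall j))
      · intro h0
        have hij : i ≠ j := by
          intro h
          rw [← h, h0] at hjpos
          exact lt_irrefl _ hjpos
        rw [hB i 0 (hq i).le, ← h0]
        exact hpair i j hij hjpos (hltall i)
      · intro hiq
        exact absurd hiq (hcap i)
  · rintro ⟨θ, hθ⟩ x hx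
    have hxb := hx.2
    have hsb := hxstar.2
    have key : ∀ i, ADLKKT.Gf μ β (q i) (E i) pτ (xstar i)
        ≤ ADLKKT.Gf μ β (q i) (E i) pτ (x i) + θ * (x i - xstar i) := by
      intro i
      have hA := ADLKKT.factA hatom hμint hβ1' (hEpos i)
        (x := xstar i) (y := x i) (pτ := pτ) (qi := q i)
        ⟨(hsb i).1, (hsb i).2⟩ ⟨(hxb i).1, (hxb i).2⟩
      obtain ⟨h1, h2, h3⟩ := hθ i
      rcases lt_or_eq_of_le (hsb i).1 with hpos | hzero
      · rcases lt_or_eq_of_le (hsb i).2 with hlt | hcap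
        · have heq := h1 hpos hlt
          rw [hB i _ (hsb i).2] at heq
          rw [heq] at hA
          linarith
        · have hθle := h3 hcap
          rw [hB i _ le_rfl, ADLKKT.Hf, if_pos rfl] at hθle
          rw [hcap] at hA ⊢
          have hH0 : ADLKKT.Hf μ β (q i) (E i) pτ (q i) = 0 := by
            rw [ADLKKT.Hf, if_pos rfl]
          rw [hH0] at hA
          nlinarith [(hxb i).2]
      · have hz : xstar i = 0 := hzero.symm
        have hθge := h2 hz
        rw [hB i 0 (hq i).le] at hθge
        rw [hz] at hA ⊢
        have hHnn := ADLKKT.Hf_nonneg (μ := μ) hatom hβ1' pτ (hEpos i).le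
          (show (0:ℝ) ≤ q i from (hq i).le)
        nlinarith [(hxb i).1]
    have hsum := Finset.sum_le_sum fun i (_ : i ∈ Finset.univ) => key i
    rw [Finset.sum_add_distrib, ← Finset.mul_sum] at hsum
    have hzsum : (∑ i, (x i - xstar i)) = 0 := by
      rw [Finset.sum_sub_distrib, hx.1, hxstar.1, sub_self]
    rw [hzsum, mul_zero, add_zero] at hsum
    exact hsum
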